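/- arXiv:1506.05058 — 4 statements merged into one kernel-verified Lean document; each statement's English description precedes it below -/
import Mathlib

section
/- The function H(ξ) = ((m+1)/2 · ξ²)^{1/(m+1)} satisfies, for all ξ > 0 and any real m > 1, the differential equation (H^m H')' + (m+1)/2 · ξ H' = 1 + H, i.e. it is an exact solution of the self-similar ODE with the upper sign. -/
open Real

/-- The function `H(ξ) = ((m+1)/2 · ξ²)^(1/(m+1))` is an exact solution of the
self-similar ODE with the upper sign: `(H^m H')' + ((m+1)/2) ξ H' = 1 + H` for `ξ > 0`. -/
theorem exact_solution_upper_sign (m : ℝ) (hm : 1 < m) (H : ℝ → ℝ)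
    (hH : ∀ x : ℝ, H x = ((m + 1) / 2 * x ^ 2) ^ (1 / (m + 1))) :
    ∀ ξ : ℝ, 0 < ξ →
      deriv (fun x => H x ^ m * deriv H x) ξ + (m + 1) / 2 * ξ * deriv H ξ = 1 + H ξ := by
  intro ξ hξ
  set c : ℝ := (m + 1) / 2 with hc
  set a : ℝ := 1 / (m + 1) with ha
  have hm1 : (0:ℝ) < m + 1 := by linarith
  have hc0 : 0 < c := by rw [hc]; positivity
  have ha0 : 0 < a := by rw [ha]; positivity
  have ham : a * (m + 1) = 1 := by rw [ha]; field_simp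
  have h2ac : 2 * a * c = 1 := by rw [ha, hc]; field_simp
  -- H equals c^a * x^(2a) on (0,∞)
  have hHg : ∀ x : ℝ, 0 < x → H x = c ^ a * x ^ (2 * a) := by
    intro x hx
    rw [hH x, Real.mul_rpow hc0.le (by positivity)]
    congr 1
    rw [← Real.rpow_natCast x 2, ← Real.rpow_mul hx.le]
    norm_num [mul_comm]
  -- derivative of H on (0,∞)
  have hDH : ∀ x : ℝ, 0 < x → HasDerivAt H (c ^ a * (2 * a * x ^ (2 * a - 1))) x := by
    intro x hx
    have hg : HasDerivAt (fun y : ℝ => c ^ a * y ^ (2 * a))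
        (c ^ a * (2 * a * x ^ (2 * a - 1))) x :=
      (Real.hasDerivAt_rpow_const (Or.inl hx.ne')).const_mul _
    have heq : (fun y : ℝ => c ^ a * y ^ (2 * a)) =ᶠ[nhds x] H := by
      filter_upwards [eventually_gt_nhds hx] with y hy
      exact (hHg y hy).symm
    exact hg.congr_of_eventuallyEq heq.symm
  have hderivH : ∀ x : ℝ, 0 < x → deriv H x = c ^ a * (2 * a * x ^ (2 * a - 1)) :=
    fun x hx => (hDH x hx).deriv
  -- key pointwise identity : H x ^ m * deriv H x = x for x > 0
  have hkey : ∀ x : ℝ, 0 < x → H x ^ m * deriv H x = x := by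
    intro x hx
    rw [hHg x hx, hderivH x hx,
      Real.mul_rpow (by positivity) (by positivity),
      ← Real.rpow_mul hc0.le, ← Real.rpow_mul hx.le]
    have e1 : c ^ (a * m) * x ^ (2 * a * m) * (c ^ a * (2 * a * x ^ (2 * a - 1)))
        = 2 * a * (c ^ (a * m) * c ^ a) * (x ^ (2 * a * m) * x ^ (2 * a - 1)) := by ring
    rw [e1, ← Real.rpow_add hc0, ← Real.rpow_add hx,
      show a * m + a = 1 from by linear_combination ham,
      show 2 * a * m + (2 * a - 1) = 1 from by linear_combination 2 * ham,
      Real.rpow_one, Real.rpow_one]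
    linear_combination x * h2ac
  -- derivative of outer function
  have hout : deriv (fun x => H x ^ m * deriv H x) ξ = 1 := by
    have heq : (fun x => H x ^ m * deriv H x) =ᶠ[nhds ξ] fun x => x := by
      filter_upwards [eventually_gt_nhds hξ] with y hy
      exact hkey y hy
    rw [heq.deriv_eq, deriv_id'']
  have hfin : c * ξ * (c ^ a * (2 * a * ξ ^ (2 * a - 1))) = c ^ a * ξ ^ (2 * a) := by
    have hx1 : ξ ^ (2 * a) = ξ * ξ ^ (2 * a - 1) := by
      rw [Real.rpow_sub hξ, Real.rpow_one]
      field_simp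
    rw [hx1, show c * ξ * (c ^ a * (2 * a * ξ ^ (2 * a - 1)))
        = 2 * a * c * (c ^ a * (ξ * ξ ^ (2 * a - 1))) from by ring, h2ac, one_mul]
  rw [hout, hderivH ξ hξ, hHg ξ hξ]
  linarith [hfin]
end

section
/- The function H(ξ) = ((m+1)/2 · ξ²)^{1/(m+1)} satisfies, for all ξ > 0 and any real m > 1, the differential equation (H^m H')' − (m+1)/2 · ξ H' = 1 − H, i.e. it is an exact solution of the self-similar ODE with the lower sign. -/
open Real

/-- The function `H(ξ) = ((m+1)/2 · ξ²)^(1/(m+1))` is an exact solution of the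
self-similar ODE with the lower sign: `(H^m H')' − ((m+1)/2) ξ H' = 1 − H` for `ξ > 0`. -/
theorem exact_solution_lower_sign (m : ℝ) (hm : 1 < m) (H : ℝ → ℝ)
    (hH : ∀ x : ℝ, H x = ((m + 1) / 2 * x ^ 2) ^ (1 / (m + 1))) :
    ∀ ξ : ℝ, 0 < ξ →
      deriv (fun x => H x ^ m * deriv H x) ξ - (m + 1) / 2 * ξ * deriv H ξ = 1 - H ξ := by
  set c : ℝ := (m + 1) / 2 with hc
  set a : ℝ := 1 / (m + 1) with ha
  have hm1 : (0:ℝ) < m + 1 := by linarith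
  clear_value c a
  have hc0 : 0 < c := by rw [hc]; positivity
  have haM : a * (m + 1) = 1 := by rw [ha]; field_simp
  have hca : c * (2 * a) = 1 := by rw [hc, ha]; field_simp
  have h1 : a * m + a = 1 := by nlinarith [haM]
  have h2 : 2 * a * m + (2 * a - 1) = 1 := by nlinarith [haM]
  have hHpos : ∀ x : ℝ, 0 < x → H x = c ^ a * x ^ (2 * a) := by
    intro x hx
    rw [hH, Real.mul_rpow hc0.le (sq_nonneg x)]
    congr 1
    rw [← Real.rpow_natCast x 2, ← Real.rpow_mul hx.le]
    norm_num [mul_comm]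
  have hderiv : ∀ x : ℝ, 0 < x → deriv H x = c ^ a * (2 * a) * x ^ (2 * a - 1) := by
    intro x hx
    have hev : H =ᶠ[nhds x] fun y => c ^ a * y ^ (2 * a) := by
      filter_upwards [IsOpen.mem_nhds isOpen_Ioi hx] with y hy
      exact hHpos y hy
    rw [hev.deriv_eq]
    have hd : HasDerivAt (fun y : ℝ => y ^ (2 * a)) ((2 * a) * x ^ (2 * a - 1)) x :=
      Real.hasDerivAt_rpow_const (Or.inl hx.ne')
    rw [(hd.const_mul (c ^ a)).deriv]
    ring
  intro ξ hξ
  have hg : (fun x => H x ^ m * deriv H x) =ᶠ[nhds ξ] fun x => x := by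
    filter_upwards [IsOpen.mem_nhds isOpen_Ioi hξ] with x hx
    have hxa : (0:ℝ) ≤ c ^ a := (Real.rpow_pos_of_pos hc0 a).le
    have hx2a : (0:ℝ) ≤ x ^ (2 * a) := (Real.rpow_pos_of_pos hx _).le
    calc H x ^ m * deriv H x
        = (c ^ a * x ^ (2 * a)) ^ m * (c ^ a * (2 * a) * x ^ (2 * a - 1)) := by
          rw [hHpos x hx, hderiv x hx]
      _ = (c ^ (a * m) * c ^ a) * (2 * a) * (x ^ (2 * a * m) * x ^ (2 * a - 1)) := by
          rw [Real.mul_rpow hxa hx2a, ← Real.rpow_mul hc0.le, ← Real.rpow_mul hx.le]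
          ring_nf
      _ = c ^ (a * m + a) * (2 * a) * x ^ (2 * a * m + (2 * a - 1)) := by
          rw [← Real.rpow_add hc0, ← Real.rpow_add hx]
      _ = x := by
          rw [h1, h2, Real.rpow_one, Real.rpow_one]
          linear_combination x * hca
  have hxi : ξ ^ (2 * a) = ξ * ξ ^ (2 * a - 1) := by
    nth_rewrite 1 [show 2 * a = 1 + (2 * a - 1) by ring]
    rw [Real.rpow_add hξ, Real.rpow_one]
  rw [hg.deriv_eq, deriv_id'', hderiv ξ hξ, hHpos ξ hξ, hxi]
  linear_combination (-(c ^ a) * (ξ * ξ ^ (2 * a - 1))) * hca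
end

section
/- Let m > 1 and let (ξ,u,w) be a C¹ solution of ξ' = u^m, u' = w, w' = u^m(1+u) − ((m+1)/2) ξ w on an interval, with u(τ) > 0 for all τ. If w(τ₀) = 0 at some interior time τ₀, then w'(τ₀) > 0. Consequently, if w > 0 on some initial subinterval, then w can never vanish later: w(τ) > 0 for all τ in the interval after that subinterval. -/
open Real Set

private lemma left_deriv_nonpos {w : ℝ → ℝ} {c x d : ℝ} (hcx : c < x)
    (hd : HasDerivAt w d x) (hpos : ∀ t ∈ Ioo c x, 0 < w t) (hx : w x = 0) :
    d ≤ 0 := by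
  have h := (hd.hasDerivWithinAt (s := Iio x))
  rw [hasDerivWithinAt_iff_tendsto_slope] at h
  have hs : Iio x \ {x} = Iio x := by
    ext t; simp (config := {contextual := true}) [lt_iff_le_and_ne]
  rw [hs] at h
  refine le_of_tendsto h ?_
  filter_upwards [Ioo_mem_nhdsLT_of_mem (⟨hcx, le_refl x⟩ : x ∈ Ioc c x)] with t ht
  have hslope : slope w x t = w t / (t - x) := by
    rw [slope_def_field]; rw [hx]; ring
  rw [hslope]
  exact le_of_lt (div_neg_of_pos_of_neg (hpos t ht) (by linarith [ht.2]))

private lemma left_limit_nonneg {w : ℝ → ℝ} {c x : ℝ} (hcx : c < x)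
    (hcont : ContinuousAt w x) (hpos : ∀ t ∈ Ioo c x, 0 < w t) : 0 ≤ w x := by
  have h : Filter.Tendsto w (nhdsWithin x (Iio x)) (nhds (w x)) :=
    hcont.continuousWithinAt.tendsto
  refine ge_of_tendsto h ?_
  filter_upwards [Ioo_mem_nhdsLT_of_mem (⟨hcx, le_refl x⟩ : x ∈ Ioc c x)] with t ht
  exact le_of_lt (hpos t ht)

/-- For a C¹ solution of `ξ' = u^m, u' = w, w' = u^m(1+u) − ((m+1)/2)ξw` on an open
interval with `u > 0`: if `w` vanishes at an interior time then `w' > 0` there; consequently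
if `w > 0` on an initial subinterval then `w > 0` at all later times in the interval. -/
theorem w_cannot_vanish (m a b : ℝ) (hm : 1 < m) (ξ u w : ℝ → ℝ)
    (hu_pos : ∀ τ ∈ Ioo a b, 0 < u τ)
    (hξ : ∀ τ ∈ Ioo a b, HasDerivAt ξ (u τ ^ m) τ)
    (hu : ∀ τ ∈ Ioo a b, HasDerivAt u (w τ) τ)
    (hw : ∀ τ ∈ Ioo a b, HasDerivAt w (u τ ^ m * (1 + u τ) - (m + 1) / 2 * ξ τ * w τ) τ) :
    (∀ τ₀ ∈ Ioo a b, w τ₀ = 0 →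
        0 < u τ₀ ^ m * (1 + u τ₀) - (m + 1) / 2 * ξ τ₀ * w τ₀) ∧
    (∀ c, a < c → c < b → (∀ τ ∈ Ioo a c, 0 < w τ) → ∀ τ ∈ Ico c b, 0 < w τ) := by
  have part1 : ∀ τ₀ ∈ Ioo a b, w τ₀ = 0 →
      0 < u τ₀ ^ m * (1 + u τ₀) - (m + 1) / 2 * ξ τ₀ * w τ₀ := by
    intro τ₀ hτ₀ hw0
    have hu0 := hu_pos τ₀ hτ₀
    rw [hw0, mul_zero, sub_zero]
    positivity
  refine ⟨part1, ?_⟩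
  intro c hac hcb hwpos τ hτ
  obtain ⟨hcτ, hτb⟩ := hτ
  have hc : c ∈ Ioo a b := ⟨hac, hcb⟩
  -- w c > 0
  have hwc : 0 < w c := by
    have h0 : 0 ≤ w c := left_limit_nonneg hac (hw c hc).continuousAt hwpos
    rcases h0.lt_or_eq with h | h
    · exact h
    · exfalso
      have hd := hw c hc
      have hpos := part1 c hc h.symm
      have hnp := left_deriv_nonpos hac hd hwpos h.symm
      linarith
  by_contra hwτ
  push_neg at hwτ
  have hcτ' : c < τ := by
    rcases hcτ.lt_or_eq with h | h
    · exact h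
    · exfalso; rw [← h] at hwτ; linarith
  have hsub : Icc c τ ⊆ Ioo a b := fun t ht => ⟨lt_of_lt_of_le hac ht.1, lt_of_le_of_lt ht.2 hτb⟩
  set S : Set ℝ := {t ∈ Icc c τ | w t ≤ 0} with hSdef
  have hSne : S.Nonempty := ⟨τ, ⟨le_of_lt hcτ', le_refl τ⟩, hwτ⟩
  have hSbdd : BddBelow S := ⟨c, fun t ht => ht.1.1⟩
  have hScl : IsClosed S := by
    have hcontOn : ContinuousOn w (Icc c τ) := fun t ht =>
      (hw t (hsub ht)).continuousAt.continuousWithinAt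
    exact hcontOn.preimage_isClosed_of_isClosed isClosed_Icc isClosed_Iic
  set x := sInf S with hxdef
  have hxS : x ∈ S := hScl.csInf_mem hSne hSbdd
  have hcx : c < x := by
    rcases hxS.1.1.lt_or_eq with h | h
    · exact h
    · exfalso; rw [← h] at hxS; linarith [hxS.2]
  have hx_in : x ∈ Ioo a b := hsub ⟨hxS.1.1, hxS.1.2⟩
  have hpos' : ∀ t ∈ Ioo c x, 0 < w t := by
    intro t ht
    by_contra hne
    push_neg at hne
    have : t ∈ S := ⟨⟨le_of_lt ht.1, le_trans (le_of_lt ht.2) hxS.1.2⟩, hne⟩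
    have := csInf_le hSbdd this
    linarith [ht.2]
  have hwx : w x = 0 := by
    have h0 : 0 ≤ w x := left_limit_nonneg hcx (hw x hx_in).continuousAt hpos'
    linarith [hxS.2]
  have hd := hw x hx_in
  have hpos := part1 x hx_in hwx
  have hnp := left_deriv_nonpos hcx hd hpos' hwx
  linarith
end

section
/- Let m > 1 and a > 0. Define on τ ∈ (−∞, 1/a): ξ(τ) = (2^m(m+1)/(m−1)^{m+1})^{1/(m−1)} (a/(1−τa))^{(m+1)/(m−1)}, u(τ) = (2(m+1)/(m−1)²)^{1/(m−1)} (a/(1−τa))^{2/(m−1)}, w(τ) = ξ(τ). Then (ξ,u,w) solves ξ' = u^m, u' = w, w' = u^m(1+u) − ((m+1)/2) ξ w, and ξ(τ) → 0 as τ → −∞. -/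
open Real Filter

private lemma log_inj_aux {x y : ℝ} (hx : 0 < x) (hy : 0 < y)
    (h : Real.log x = Real.log y) : x = y := by
  rw [← Real.exp_log hx, ← Real.exp_log hy, h]

private lemma hasDerivAt_aux (a C r τ : ℝ) (hb : 0 < 1 - τ * a) (ha : 0 < a) :
    HasDerivAt (fun s => C * (a / (1 - s * a)) ^ r) (C * r * (a / (1 - τ * a)) ^ (r + 1)) τ := by
  have hb' : (1 - τ * a) ≠ 0 := hb.ne'
  have ht : 0 < a / (1 - τ * a) := div_pos ha hb
  have h1 : HasDerivAt (fun s : ℝ => 1 - s * a) (-a) τ := by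
    simpa using ((hasDerivAt_id τ).mul_const a).const_sub 1
  have h2 : HasDerivAt (fun s : ℝ => a / (1 - s * a)) (a * a / (1 - τ * a)^2) τ := by
    have := (hasDerivAt_const τ a).div h1 hb'
    refine this.congr_deriv ?_
    ring
  have h3 := (h2.rpow_const (p := r) (Or.inl ht.ne')).const_mul C
  refine h3.congr_deriv ?_
  have e1 : a * a / (1 - τ * a)^2 = (a / (1 - τ * a)) ^ (2:ℝ) := by
    rw [Real.rpow_two, div_pow]; ring
  rw [e1, show r + 1 = 2 + (r-1) by ring, Real.rpow_add ht]
  ring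

/-- The explicit solution of the near-field system (upper sign) on `τ ∈ (−∞, 1/a)`:
`ξ(τ) = (2^m(m+1)/(m−1)^{m+1})^{1/(m−1)} (a/(1−τa))^{(m+1)/(m−1)}`,
`u(τ) = (2(m+1)/(m−1)²)^{1/(m−1)} (a/(1−τa))^{2/(m−1)}`, `w = ξ`,
and `ξ(τ) → 0` as `τ → −∞`. -/
theorem exact_near_field_solution (m a : ℝ) (hm : 1 < m) (ha : 0 < a)
    (ξ u w : ℝ → ℝ)
    (hξdef : ∀ τ : ℝ, ξ τ =
      (2 ^ m * (m + 1) / (m - 1) ^ (m + 1)) ^ (1 / (m - 1)) *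
        (a / (1 - τ * a)) ^ ((m + 1) / (m - 1)))
    (hudef : ∀ τ : ℝ, u τ =
      (2 * (m + 1) / (m - 1) ^ 2) ^ (1 / (m - 1)) * (a / (1 - τ * a)) ^ (2 / (m - 1)))
    (hwdef : ∀ τ : ℝ, w τ = ξ τ) :
    (∀ τ : ℝ, τ < 1 / a →
      HasDerivAt ξ (u τ ^ m) τ ∧
      HasDerivAt u (w τ) τ ∧
      HasDerivAt w (u τ ^ m * (1 + u τ) - (m + 1) / 2 * ξ τ * w τ) τ) ∧
    Tendsto ξ atBot (nhds 0) := by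
  have hm1 : (0:ℝ) < m - 1 := by linarith
  have hmp : (0:ℝ) < m + 1 := by linarith
  have h2 : (0:ℝ) < 2 := by norm_num
  have hξfun : ξ = fun τ => (2 ^ m * (m + 1) / (m - 1) ^ (m + 1)) ^ (1 / (m - 1)) *
      (a / (1 - τ * a)) ^ ((m + 1) / (m - 1)) := funext hξdef
  have hufun : u = fun τ => (2 * (m + 1) / (m - 1) ^ 2) ^ (1 / (m - 1)) *
      (a / (1 - τ * a)) ^ (2 / (m - 1)) := funext hudef
  have hwfun : w = ξ := funext hwdef
  constructor
  · intro τ hτ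
    have hb : 0 < 1 - τ * a := by
      have : τ * a < 1 := by
        calc τ * a < (1/a) * a := by exact mul_lt_mul_of_pos_right hτ ha
        _ = 1 := by field_simp
      linarith
    have ht : 0 < a / (1 - τ * a) := div_pos ha hb
    set t := a / (1 - τ * a) with htdef
    -- derivatives in raw form
    have hdξ : HasDerivAt ξ
        ((2 ^ m * (m + 1) / (m - 1) ^ (m + 1)) ^ (1 / (m - 1)) * ((m + 1) / (m - 1)) *
          t ^ ((m + 1) / (m - 1) + 1)) τ := by
      rw [hξfun]; exact hasDerivAt_aux a _ _ τ hb ha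
    have hdu : HasDerivAt u
        ((2 * (m + 1) / (m - 1) ^ 2) ^ (1 / (m - 1)) * (2 / (m - 1)) *
          t ^ (2 / (m - 1) + 1)) τ := by
      rw [hufun]; exact hasDerivAt_aux a _ _ τ hb ha
    -- key identity 1 : u τ ^ m equals the derivative of ξ
    have key1 : u τ ^ m = (2 ^ m * (m + 1) / (m - 1) ^ (m + 1)) ^ (1 / (m - 1)) *
        ((m + 1) / (m - 1)) * t ^ ((m + 1) / (m - 1) + 1) := by
      rw [hudef τ, ← htdef]
      apply log_inj_aux (by positivity) (by positivity)
      repeat' (first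
        | rw [Real.log_rpow (by positivity)]
        | rw [Real.log_mul (by positivity) (by positivity)]
        | rw [Real.log_div (by positivity) (by positivity)]
        | rw [Real.log_pow])
      push_cast
      field_simp
      ring
    -- key identity 2 : w τ equals the derivative of u
    have key2 : w τ = (2 * (m + 1) / (m - 1) ^ 2) ^ (1 / (m - 1)) * (2 / (m - 1)) *
        t ^ (2 / (m - 1) + 1) := by
      rw [hwdef τ, hξdef τ, ← htdef]
      apply log_inj_aux (by positivity) (by positivity)
      repeat' (first
        | rw [Real.log_rpow (by positivity)]
        | rw [Real.log_mul (by positivity) (by positivity)]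
        | rw [Real.log_div (by positivity) (by positivity)]
        | rw [Real.log_pow])
      push_cast
      field_simp
      ring
    -- key identity 3 : u^{m+1} = (m+1)/2 ξ w
    have key3 : u τ ^ m * u τ = (m + 1) / 2 * ξ τ * w τ := by
      rw [hudef τ, hξdef τ, hwdef τ, hξdef τ, ← htdef]
      apply log_inj_aux (by positivity) (by positivity)
      repeat' (first
        | rw [Real.log_rpow (by positivity)]
        | rw [Real.log_mul (by positivity) (by positivity)]
        | rw [Real.log_div (by positivity) (by positivity)]
        | rw [Real.log_pow])
      push_cast
      field_simp
      ring
    refine ⟨by rw [key1]; exact hdξ, by rw [key2]; exact hdu, ?_⟩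
    have e : u τ ^ m * (1 + u τ) - (m + 1) / 2 * ξ τ * w τ = u τ ^ m := by
      have : u τ ^ m * (1 + u τ) = u τ ^ m + u τ ^ m * u τ := by ring
      rw [this]; linarith [key3]
    rw [e, key1, hwfun]
    exact hdξ
  · -- the limit as τ → −∞
    have hp : 0 < (m + 1) / (m - 1) := by positivity
    have h1 : Tendsto (fun τ : ℝ => 1 - τ * a) atBot atTop := by
      have hmul : Tendsto (fun τ : ℝ => τ * a) atBot atBot :=
        tendsto_id.atBot_mul_const ha
      have hneg : Tendsto (fun τ : ℝ => -(τ * a)) atBot atTop :=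
        tendsto_neg_atBot_atTop.comp hmul
      have := tendsto_atTop_add_const_left atBot 1 hneg
      simpa [sub_eq_add_neg] using this
    have h2' : Tendsto (fun τ : ℝ => a / (1 - τ * a)) atBot (nhds 0) :=
      Tendsto.div_atTop tendsto_const_nhds h1
    have h3 : Tendsto (fun x : ℝ => x ^ ((m + 1) / (m - 1))) (nhds 0) (nhds 0) := by
      have := (Real.continuousAt_rpow_const 0 ((m + 1) / (m - 1)) (Or.inr hp.le)).tendsto
      rwa [Real.zero_rpow hp.ne'] at this
    have := (h3.comp h2').const_mul
      ((2 ^ m * (m + 1) / (m - 1) ^ (m + 1)) ^ (1 / (m - 1)))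
    rw [hξfun]
    simpa using this
end
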